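/- For a codimension-3 decoration (λ, μ) with k = ∑μⱼ and λ₁ + λ₂ = k+1, define p₀(λ, μ) = (rsort(λ₁, λ₂, μ₁, …, μ_t), (λ₃, …, λ_b)). Then μ₁ ≤ λ₂, and p₀(p₀(λ, μ)) = (λ, μ). -/

import Mathlib

/-- Sort a list of integers in non-increasing order. -/
def rsort (l : List ℤ) : List ℤ := List.insertionSort (· ≥ ·) l

/-- Remove all non-positive parts (trailing zeros) from a partition. -/
def strip (l : List ℤ) : List ℤ := l.filter (fun x => 0 < x)

/-- The smallest minimal link of a codimension-`c` pair of partitions `(λ, μ)`: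
choose the `c` largest parts of `λ` (padding with zeros if needed), shift them by
`p = (c-2)k + 1 - (λ₁ + ⋯ + λ_c)` where `k = ∑ μⱼ`, merge with `μ` and re-sort;
the other partition becomes `(λ_{c+1}, …, λ_b)`. -/
def smlink (c : ℕ) (P : List ℤ × List ℤ) : List ℤ × List ℤ :=
  let p : ℤ := ((c : ℤ) - 2) * P.2.sum + 1 - (P.1.take c).sum
  (strip (rsort ((P.1.take c ++ List.replicate (c - P.1.length) 0).map (· + p) ++ P.2)),
   strip (P.1.drop c))

/-- The smallest minimal link of `P` produces nonnegative parts, i.e. `λ_c + p ≥ 0`. -/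
def ValidLink (c : ℕ) (P : List ℤ × List ℤ) : Prop :=
  0 ≤ P.1.getD (c - 1) 0 + (((c : ℤ) - 2) * P.2.sum + 1 - (P.1.take c).sum)

/-- A partition: a non-increasing list of positive integers. -/
def IsPartition (l : List ℤ) : Prop := l.Pairwise (· ≥ ·) ∧ ∀ x ∈ l, 0 < x

/-- A codimension-`c` decoration: a pair of partitions reachable to the complete
intersection pair `((1^c), (1))` by finitely many smallest minimal links, all of
whose intermediate links are valid (have nonnegative parts). -/
def IsDecoration (c : ℕ) (P : List ℤ × List ℤ) : Prop :=
  IsPartition P.1 ∧ IsPartition P.2 ∧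
  ∃ n : ℕ, (∀ m < n, ValidLink c ((smlink c)^[m] P)) ∧
    (smlink c)^[n] P = (List.replicate c 1, [1])

/-- The zero-shift link `p₀` of a codimension-3 pair `(λ, μ)` with `λ₁+λ₂ = k+1`:
`p₀(λ, μ) = (rsort(λ₁, λ₂, μ₁, …, μ_t), (λ₃, …, λ_b))`. -/
def p0 (P : List ℤ × List ℤ) : List ℤ × List ℤ :=
  (rsort (P.1.getD 0 0 :: P.1.getD 1 0 :: P.2), P.1.drop 2)

-- ==================== auxiliary lemmas ====================

lemma rsort_sorted (l : List ℤ) : (rsort l).Pairwise (· ≥ ·) := List.pairwise_insertionSort _ _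
lemma rsort_perm (l : List ℤ) : (rsort l).Perm l := List.perm_insertionSort _ _

instance : IsAntisymm ℤ (· ≥ ·) := ⟨fun _ _ h1 h2 => le_antisymm h2 h1⟩

lemma rsort_eq_of_sorted {l : List ℤ} (h : l.Pairwise (· ≥ ·)) : rsort l = l :=
  List.Perm.eq_of_pairwise' (rsort_sorted l) h (rsort_perm l)

lemma strip_eq_self {l : List ℤ} (h : ∀ x ∈ l, 0 < x) : strip l = l :=
  List.filter_eq_self.mpr (by simpa using h)

lemma strip_sorted {l : List ℤ} (h : l.Pairwise (· ≥ ·)) : (strip l).Pairwise (· ≥ ·) :=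
  List.Pairwise.filter _ h

lemma strip_pos (l : List ℤ) : ∀ x ∈ strip l, 0 < x := by
  intro x hx
  simpa using (List.mem_filter.mp hx).2

lemma strip_sum {l : List ℤ} (h : ∀ x ∈ l, 0 ≤ x) : (strip l).sum = l.sum := by
  induction l with
  | nil => rfl
  | cons a t ih =>
    have ha := h a (List.mem_cons_self)
    have ih' := ih (fun x hx => h x (List.mem_cons_of_mem _ hx))
    rcases lt_or_eq_of_le ha with hp | hp
    · rw [strip, List.filter_cons, if_pos (by simpa using hp)]
      rw [List.sum_cons, List.sum_cons, ← strip, ih']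
    · rw [strip, List.filter_cons, if_neg (by simp [← hp])]
      rw [List.sum_cons, ← strip, ih', ← hp, zero_add]

lemma getD_nonneg : ∀ (l : List ℤ), (∀ x ∈ l, 0 ≤ x) → ∀ i : ℕ, 0 ≤ l.getD i 0 := by
  intro l
  induction l with
  | nil => intro _ i; simp
  | cons a t ih =>
    intro h i
    cases i with
    | zero => simpa using h a (List.mem_cons_self)
    | succ j => simpa using ih (fun x hx => h x (List.mem_cons_of_mem _ hx)) j

lemma le_getD_zero {l : List ℤ} (hs : l.Pairwise (· ≥ ·)) {x : ℤ} (hx : x ∈ l) :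
    x ≤ l.getD 0 0 := by
  cases l with
  | nil => simp at hx
  | cons a t =>
    rcases List.mem_cons.mp hx with rfl | hx'
    · simp
    · simpa using List.rel_of_pairwise_cons hs hx'

lemma pair_sublist_le {l : List ℤ} (hs : l.Pairwise (· ≥ ·)) {u v : ℤ}
    (h : List.Sublist [u, v] l) : u + v ≤ l.getD 0 0 + l.getD 1 0 := by
  cases l with
  | nil => simp at h
  | cons a t =>
    rcases List.sublist_cons_iff.mp h with h' | ⟨l', h1, h2⟩
    · have hu : u ∈ t := h'.subset (by simp)
      have hv : v ∈ t := h'.subset (by simp)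
      have h1 : u ≤ a := by simpa using List.rel_of_pairwise_cons hs hu
      have h2 : v ≤ t.getD 0 0 := le_getD_zero hs.of_cons hv
      simp only [List.getD_cons_zero, List.getD_cons_succ]
      linarith
    · cases h1
      have hv : v ∈ t := h2.subset (by simp)
      have h2' : v ≤ t.getD 0 0 := le_getD_zero hs.of_cons hv
      simp only [List.getD_cons_zero, List.getD_cons_succ]
      linarith

lemma pair_subperm_le {l : List ℤ} (hs : l.Pairwise (· ≥ ·)) {u v : ℤ} (huv : v ≤ u)
    (h : List.Subperm [u, v] l) : u + v ≤ l.getD 0 0 + l.getD 1 0 := by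
  refine pair_sublist_le hs (List.sublist_of_subperm_of_pairwise h ?_ hs)
  exact List.pairwise_cons.mpr ⟨by simpa using huv, List.pairwise_singleton _ _⟩

lemma take3_sum (l : List ℤ) : (l.take 3).sum = l.getD 0 0 + l.getD 1 0 + l.getD 2 0 := by
  match l with
  | [] => simp
  | [a] => simp
  | [a, b] => simp
  | a :: b :: c :: r => simp [List.take]; ring

lemma validlink_iff (P : List ℤ × List ℤ) :
    ValidLink 3 P ↔ P.1.getD 0 0 + P.1.getD 1 0 ≤ P.2.sum + 1 := by
  unfold ValidLink
  rw [take3_sum]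
  have h3 : ((3 : ℕ) : ℤ) - 2 = 1 := by norm_num
  rw [h3, one_mul]
  constructor <;> intro h <;> linarith

lemma map_add_sum (l : List ℤ) (p : ℤ) : (l.map (· + p)).sum = l.sum + l.length * p := by
  induction l with
  | nil => simp
  | cons a t ih => simp [ih]; ring

lemma list_len_le_sum {l : List ℤ} (h : ∀ x ∈ l, 0 < x) : (l.length : ℤ) ≤ l.sum := by
  induction l with
  | nil => simp
  | cons a t ih =>
    have h1 : 1 ≤ a := h a (List.mem_cons_self)
    have h2 := ih (fun x hx => h x (List.mem_cons_of_mem _ hx))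
    simp only [List.length_cons, List.sum_cons]
    push_cast
    linarith

lemma isPartition_smlink {P : List ℤ × List ℤ} (h1 : IsPartition P.1) :
    IsPartition (smlink 3 P).1 ∧ IsPartition (smlink 3 P).2 := by
  refine ⟨⟨strip_sorted (rsort_sorted _), strip_pos _⟩,
    ⟨strip_sorted (List.Pairwise.sublist (List.drop_sublist 3 P.1) h1.1), strip_pos _⟩⟩

lemma mem_padded_ge {l : List ℤ} (h : IsPartition l) :
    ∀ x ∈ l.take 3 ++ List.replicate (3 - l.length) 0, l.getD 2 0 ≤ x := by
  obtain ⟨hs, hp⟩ := h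
  match l with
  | [] => intro x hx; simp at hx; simp [hx]
  | [a] =>
    intro x hx
    simp at hx
    rcases hx with rfl | rfl
    · simpa using le_of_lt (hp x (by simp))
    · simp
  | [a, b] =>
    intro x hx
    simp at hx
    rcases hx with rfl | rfl | rfl
    · simpa using le_of_lt (hp x (by simp))
    · simpa using le_of_lt (hp x (by simp))
    · simp
  | a :: b :: c :: r =>
    intro x hx
    have hlen : 3 - (a :: b :: c :: r).length = 0 := by simp
    rw [hlen] at hx
    simp only [List.take, List.replicate, List.append_nil] at hx
    simp only [List.pairwise_cons] at hs
    have hac : c ≤ a := hs.1 c (by simp)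
    have hbc : c ≤ b := hs.2.1 c (by simp)
    simp at hx
    rcases hx with rfl | rfl | rfl <;> simp [hac, hbc]

lemma smlink_sums {P : List ℤ × List ℤ} (h1 : IsPartition P.1) (h2 : IsPartition P.2)
    (hv : ValidLink 3 P) :
    (smlink 3 P).1.sum = 4 * P.2.sum + 3 - 2 * (P.1.take 3).sum ∧
    (smlink 3 P).2.sum = P.1.sum - (P.1.take 3).sum := by
  have h3 : ((3 : ℕ) : ℤ) - 2 = 1 := by norm_num
  set p : ℤ := (((3 : ℕ) : ℤ) - 2) * P.2.sum + 1 - (P.1.take 3).sum with hpdef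
  have hvp : 0 ≤ P.1.getD 2 0 + p := hv
  have hT := mem_padded_ge h1
  have hfst : (smlink 3 P).1 =
      strip (rsort ((P.1.take 3 ++ List.replicate (3 - P.1.length) 0).map (· + p) ++ P.2)) := rfl
  have hallnn : ∀ x ∈ rsort ((P.1.take 3 ++ List.replicate (3 - P.1.length) 0).map (· + p) ++ P.2),
      (0:ℤ) ≤ x := by
    intro x hx
    rcases List.mem_append.mp ((rsort_perm _).mem_iff.mp hx) with hx1 | hx2
    · obtain ⟨y, hy, rfl⟩ := List.mem_map.mp hx1
      have := hT y hy
      linarith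
    · exact le_of_lt (h2.2 x hx2)
  have hlen : ((P.1.take 3 ++ List.replicate (3 - P.1.length) 0).length : ℤ) = 3 := by
    have : (P.1.take 3 ++ List.replicate (3 - P.1.length) 0).length = 3 := by
      simp [List.length_take]; omega
    rw [this]; norm_num
  constructor
  · rw [hfst, strip_sum hallnn, (rsort_perm _).sum_eq, List.sum_append, map_add_sum,
      List.sum_append, hlen]
    simp only [List.sum_replicate, smul_zero, add_zero]
    rw [hpdef, h3, one_mul]
    ring
  · have h2nn : ∀ x ∈ P.1.drop 3, (0:ℤ) ≤ x := fun x hx =>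
      le_of_lt (h1.2 x (List.mem_of_mem_drop hx))
    have e2 : (smlink 3 P).2.sum = (P.1.drop 3).sum := strip_sum h2nn
    rw [e2]
    have := List.sum_take_add_sum_drop P.1 3
    linarith

lemma key : ∀ (n : ℕ) (P : List ℤ × List ℤ), IsPartition P.1 → IsPartition P.2 →
    (∀ m < n, ValidLink 3 ((smlink 3)^[m] P)) →
    (smlink 3)^[n] P = (List.replicate 3 1, [1]) →
    P.1.sum = 2 * P.2.sum + 1 ∧ P.2 ≠ [] := by
  intro n
  induction n with
  | zero =>
    intro P _ _ _ hbase
    rw [Function.iterate_zero_apply] at hbase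
    rw [hbase]
    norm_num [List.replicate]
  | succ n ih =>
    intro P h1 h2 hval hbase
    have hv0 : ValidLink 3 P := by simpa using hval 0 (Nat.succ_pos n)
    have hp := isPartition_smlink (P := P) h1
    have ihres := ih (smlink 3 P) hp.1 hp.2
      (fun m hm => by
        have := hval (m + 1) (by omega)
        rwa [Function.iterate_succ_apply] at this)
      (by rw [← Function.iterate_succ_apply]; exact hbase)
    obtain ⟨e1, e2⟩ := smlink_sums h1 h2 hv0
    obtain ⟨ihsum, ihne⟩ := ihres
    rw [e1, e2] at ihsum
    constructor
    · linarith
    · intro hmu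
      have hk0 : P.2.sum = 0 := by rw [hmu]; rfl
      have hd : strip (P.1.drop 3) ≠ [] := ihne
      have hlen : 4 ≤ P.1.length := by
        by_contra hc
        push_neg at hc
        have hnil : P.1.drop 3 = [] := List.drop_eq_nil_of_le (by omega)
        apply hd
        rw [hnil]
        rfl
      have hsl : (P.1.length : ℤ) ≤ P.1.sum := list_len_le_sum h1.2
      have hts : (P.1.take 3).sum ≤ P.1.sum := by
        have := List.sum_take_add_sum_drop P.1 3
        have h2nn : (0:ℤ) ≤ (P.1.drop 3).sum :=
          List.sum_nonneg (fun x hx => le_of_lt (h1.2 x (List.mem_of_mem_drop hx)))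
        linarith
      have h4 : (4 : ℤ) ≤ P.1.length := by exact_mod_cast hlen
      -- ihsum with hk0 : 4*0+3-2s = 2*(P.1.sum - s)+1  →  P.1.sum = 1 + ... 
      rw [hk0] at ihsum
      -- P.1.sum ≥ 4, and ihsum gives P.1.sum = 1 + (s - s)... compute:
      -- 3 - 2s = 2 P.1.sum - 2 s + 1 → P.1.sum = 1
      linarith


/-- For a codimension-3 decoration `(λ, μ)` with `k = ∑μⱼ` and `λ₁ + λ₂ = k+1`,
one has `μ₁ ≤ λ₂`, and `p₀(p₀(λ, μ)) = (λ, μ)`. -/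
theorem stmt10 (P : List ℤ × List ℤ) (k : ℤ) (hk : P.2.sum = k)
    (h : IsDecoration 3 P) (hll : P.1.getD 0 0 + P.1.getD 1 0 = k + 1) :
    P.2.getD 0 0 ≤ P.1.getD 1 0 ∧ p0 (p0 P) = P := by
  obtain ⟨h1, h2, n, hval, hbase⟩ := h
  obtain ⟨hsum, hne⟩ := key n P h1 h2 hval hbase
  obtain ⟨lam, mu⟩ := P
  dsimp only at h1 h2 hk hll hsum hne hval hbase ⊢
  subst hk
  rcases mu with _ | ⟨m0, mt⟩
  · exact absurd rfl hne
  have hm0 : 0 < m0 := h2.2 m0 (by simp)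
  have hmt : (0:ℤ) ≤ mt.sum := List.sum_nonneg (fun x hx => le_of_lt (h2.2 x (by simp [hx])))
  have hk1 : (1:ℤ) ≤ (m0 :: mt).sum := by rw [List.sum_cons]; linarith
  rcases lam with _ | ⟨a, lam⟩
  · simp at hll
    linarith
  rcases lam with _ | ⟨b, lam⟩
  · simp at hll hsum
    linarith
  rcases lam with _ | ⟨c, r⟩
  · simp at hll hsum
    linarith
  simp only [List.getD_cons_zero, List.getD_cons_succ] at hll ⊢
  rw [List.sum_cons] at hll
  have hab : b ≤ a := List.rel_of_pairwise_cons h1.1 (by simp)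
  have hbc : c ≤ b := List.rel_of_pairwise_cons h1.1.of_cons (by simp)
  have hc : 0 < c := h1.2 c (by simp)
  have hS : a + b + c + r.sum = 2 * (m0 + mt.sum) + 1 := by
    rw [List.sum_cons, List.sum_cons, List.sum_cons, List.sum_cons] at hsum
    linarith
  have hv1 : ValidLink 3 (smlink 3 (a :: b :: c :: r, m0 :: mt)) := by
    rcases n with _ | _ | n
    · rw [Function.iterate_zero_apply] at hbase
      rw [hbase]
      unfold ValidLink smlink
      decide
    · rw [Function.iterate_one] at hbase
      rw [hbase]
      unfold ValidLink
      decide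
    · have := hval 1 (by omega)
      rwa [Function.iterate_one] at this
  have hQ : smlink 3 (a :: b :: c :: r, m0 :: mt) =
      (strip (rsort ((a - c) :: (b - c) :: (0:ℤ) :: m0 :: mt)), r) := by
    have e0 : (3 - (a :: b :: c :: r).length) = 0 := by simp
    simp only [smlink, e0, List.replicate, List.take_succ_cons, List.take_zero,
      List.append_nil, List.map_cons, List.map_nil, List.drop_succ_cons, List.drop_zero,
      List.sum_cons, List.sum_nil]
    rw [Prod.mk.injEq]
    refine ⟨?_, strip_eq_self (fun x hx => h1.2 x (by simp [hx]))⟩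
    have ea : a + ((↑(3:ℕ) - 2) * (m0 + mt.sum) + 1 - (a + (b + (c + 0)))) = a - c := by
      push_cast; linarith
    have eb : b + ((↑(3:ℕ) - 2) * (m0 + mt.sum) + 1 - (a + (b + (c + 0)))) = b - c := by
      push_cast; linarith
    have ec : c + ((↑(3:ℕ) - 2) * (m0 + mt.sum) + 1 - (a + (b + (c + 0)))) = 0 := by
      push_cast; linarith
    rw [ea, eb, ec]
    rfl
  rw [hQ] at hv1
  have hvq := (validlink_iff _).mp hv1
  dsimp only at hvq
  set L := strip (rsort ((a - c) :: (b - c) :: (0:ℤ) :: m0 :: mt)) with hLdef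
  have hLsorted : L.Pairwise (· ≥ ·) := strip_sorted (rsort_sorted _)
  have hLpos := strip_pos (rsort ((a - c) :: (b - c) :: (0:ℤ) :: m0 :: mt))
  have hmemL : m0 ∈ L := by
    rw [hLdef, strip]
    refine List.mem_filter.mpr ⟨?_, by simpa using hm0⟩
    exact (rsort_perm _).mem_iff.mpr (by simp)
  have hlow : m0 + (a - c) ≤ L.getD 0 0 + L.getD 1 0 := by
    have hac0 : (0:ℤ) ≤ a - c := by linarith
    rcases eq_or_lt_of_le hac0 with heq | hlt
    · have hb1 : m0 ≤ L.getD 0 0 := le_getD_zero hLsorted hmemL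
      have hb2 : (0:ℤ) ≤ L.getD 1 0 := getD_nonneg L (fun x hx => le_of_lt (hLpos x hx)) 1
      linarith
    · have hsub : List.Sublist [a - c, m0] (strip ((a - c) :: (b - c) :: (0:ℤ) :: m0 :: mt)) := by
        rw [strip, List.filter_cons, if_pos (by simpa using hlt)]
        refine List.Sublist.cons₂ _ ?_
        rw [List.singleton_sublist]
        exact List.mem_filter.mpr ⟨by simp, by simpa using hm0⟩
      have hperm : (strip ((a - c) :: (b - c) :: (0:ℤ) :: m0 :: mt)).Perm L :=
        List.Perm.filter _ (rsort_perm _).symm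
      have hsp : List.Subperm [a - c, m0] L := hsub.subperm.trans hperm.subperm
      rcases le_total m0 (a - c) with hord | hord
      · have := pair_subperm_le hLsorted hord hsp
        linarith
      · have hsp' : List.Subperm [m0, a - c] L :=
          (List.Perm.swap (a - c) m0 []).subperm.trans hsp
        have := pair_subperm_le hLsorted hord hsp'
        linarith
  have hm0b : m0 ≤ b := by linarith
  refine ⟨hm0b, ?_⟩
  have hmu_le : ∀ x ∈ m0 :: mt, x ≤ b := by
    intro x hx
    rcases List.mem_cons.mp hx with rfl | hx'
    · exact hm0b
    · exact le_trans (List.rel_of_pairwise_cons h2.1 hx') hm0b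
  have hs1 : (a :: b :: m0 :: mt).Pairwise (· ≥ ·) := by
    rw [List.pairwise_cons]
    refine ⟨?_, ?_⟩
    · intro x hx
      rcases List.mem_cons.mp hx with rfl | hx'
      · exact hab
      · exact le_trans (hmu_le x hx') hab
    · rw [List.pairwise_cons]
      exact ⟨hmu_le, h2.1⟩
  have hp1 : p0 (a :: b :: c :: r, m0 :: mt) = (a :: b :: m0 :: mt, c :: r) := by
    unfold p0
    dsimp only
    simp only [List.getD_cons_zero, List.getD_cons_succ, List.drop_succ_cons, List.drop_zero]
    rw [rsort_eq_of_sorted hs1]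
  rw [hp1]
  unfold p0
  dsimp only
  simp only [List.getD_cons_zero, List.getD_cons_succ, List.drop_succ_cons, List.drop_zero]
  rw [rsort_eq_of_sorted h1.1]
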